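/- arXiv:1703.01924 — 2 statements merged into one kernel-verified Lean document; each statement's English description precedes it below -/
import Mathlib

section
/- Finite Representation Theorem in polynomial form, for sets of desirable gambles: a set of desirable gambles D ⊆ L(X^N) is exchangeable if and only if there exists a (necessarily unique) set D̃ ⊆ V_N(Σ_X) such that D = {f ∈ L(X^N) : Mn_N(f) ∈ D̃}. In that case D̃ = Mn_N(D), and D is coherent if and only if D̃ is coherent with respect to the Bernstein ordering (i.e., 0 ∉ D̃, every h that is a positive linear combination of Bernstein gambles B_m belongs to D̃, and D̃ is closed under multiplication by positive reals and under addition). -/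
namespace ExchPaper

/-- The lift of a permutation `σ` of `{1,…,N}` to gambles on `X^N`: `(σ^t f)(x) = f(σx)`. -/
def lift {X : Type*} (N : ℕ) (σ : Equiv.Perm (Fin N)) (f : (Fin N → X) → ℝ) :
    (Fin N → X) → ℝ :=
  fun x => f (fun k => x (σ k))
/-- `I_N`: the linear span of `{f − σ^t f : f ∈ L(X^N), σ a permutation of {1,…,N}}`. -/
def IN (X : Type*) (N : ℕ) : Submodule ℝ ((Fin N → X) → ℝ) :=
  Submodule.span ℝ
    {g | ∃ (f : (Fin N → X) → ℝ) (σ : Equiv.Perm (Fin N)), g = f - lift N σ f}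
/-- The count vector `T(x)` of a sequence `x ∈ X^N`: `T(x)_z = #{k : x_k = z}`. -/
def countVec {X : Type*} [Fintype X] [DecidableEq X] (N : ℕ) (x : Fin N → X) : X → ℕ :=
  fun z => (Finset.univ.filter (fun k => x k = z)).card

/-- The set of count vectors `C_N = {m ∈ ℕ^X : Σ_z m_z = N}`. -/
def CNset (X : Type*) [Fintype X] (N : ℕ) : Set (X → ℕ) :=
  {m | ∑ z, m z = N}

lemma CNset_finite (X : Type*) [Fintype X] (N : ℕ) : (CNset X N).Finite := by
  apply Set.Finite.subset (Set.Finite.pi (fun _ : X => Set.finite_Iic N))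
  intro m hm
  simp only [Set.mem_pi, Set.mem_univ, Set.mem_Iic, forall_true_left]
  intro z
  calc m z ≤ ∑ w, m w := Finset.single_le_sum (fun i _ => Nat.zero_le (m i)) (Finset.mem_univ z)
  _ = N := hm

noncomputable instance (X : Type*) [Fintype X] (N : ℕ) : Fintype (CNset X N) :=
  (CNset_finite X N).fintype

/-- The permutation invariant atom `A_m = {x ∈ X^N : T(x) = m}`. -/
def atom {X : Type*} [Fintype X] [DecidableEq X] (N : ℕ) (m : X → ℕ) : Finset (Fin N → X) :=
  Finset.univ.filter (fun x => countVec N x = m)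

/-- `Hy_N(f)(m) = (1/|A_m|) Σ_{y ∈ A_m} f(y)`. -/
noncomputable def Hy {X : Type*} [Fintype X] [DecidableEq X] (N : ℕ)
    (f : (Fin N → X) → ℝ) (m : X → ℕ) : ℝ :=
  (1 / ((atom N m).card : ℝ)) * ∑ y ∈ atom N m, f y

/-- `Hy_N(f)` as a gamble on `C_N`. -/
noncomputable def HyFun {X : Type*} [Fintype X] [DecidableEq X] (N : ℕ)
    (f : (Fin N → X) → ℝ) : CNset X N → ℝ :=
  fun m => Hy N f m.1
/-- The `X`-simplex `Σ_X = {θ ∈ ℝ^X : θ ≥ 0, Σ_z θ_z = 1}`. -/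
def Splx (X : Type*) [Fintype X] : Set (X → ℝ) :=
  {θ | (∀ z, 0 ≤ θ z) ∧ ∑ z, θ z = 1}

/-- The multinomial coefficient `binom(N,m) = N!/∏_z m_z!`. -/
noncomputable def binomR {X : Type*} [Fintype X] (N : ℕ) (m : X → ℕ) : ℝ :=
  (N.factorial : ℝ) / ∏ z, ((m z).factorial : ℝ)

/-- The Bernstein gamble `B_m(θ) = binom(N,m) ∏_z θ_z^{m_z}` on the simplex `Σ_X`. -/
noncomputable def bern {X : Type*} [Fintype X] (N : ℕ) (m : X → ℕ) : Splx X → ℝ :=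
  fun θ => binomR N m * ∏ z, (θ.1 z) ^ (m z)

/-- `V_N(Σ_X)`: the linear space of gambles on `Σ_X` that are restrictions to `Σ_X` of
polynomials on `ℝ^X` with a representation of degree at most `N`. -/
def VN (X : Type*) [Fintype X] (N : ℕ) : Set (Splx X → ℝ) :=
  {h | ∃ p : MvPolynomial X ℝ, p.totalDegree ≤ N ∧ ∀ θ : Splx X, h θ = MvPolynomial.eval θ.1 p}
/-- The positive hull `Posi(S)`: all positive finite linear combinations
`Σ_{k=1}^n λ_k u_k` with `n ≥ 1`, `λ_k > 0` and `u_k ∈ S`. -/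
def Posi {W : Type*} [AddCommMonoid W] [Module ℝ W] (S : Set W) : Set W :=
  {v | ∃ (n : ℕ) (l : Fin n → ℝ) (u : Fin n → W), 0 < n ∧ (∀ k, 0 < l k) ∧
    (∀ k, u k ∈ S) ∧ v = ∑ k, l k • u k}
/-- Coherence of a set of desirable gambles `D` on a possibility space `α`: `0 ∉ D`; every
nonzero nonnegative gamble belongs to `D`; `D` is closed under multiplication by positive
reals and under addition. -/
def CohDes {α : Type*} (D : Set (α → ℝ)) : Prop :=
  (0 : α → ℝ) ∉ D ∧
  (∀ f : α → ℝ, (∀ x, 0 ≤ f x) → f ≠ 0 → f ∈ D) ∧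
  (∀ f ∈ D, ∀ l : ℝ, 0 < l → l • f ∈ D) ∧
  (∀ f ∈ D, ∀ g ∈ D, f + g ∈ D)

/-- `CoMn_N : L(C_N) → V_N(Σ_X)`, `g ↦ Σ_{m ∈ C_N} g(m) B_m`. -/
noncomputable def CoMn {X : Type*} [Fintype X] (N : ℕ) (g : CNset X N → ℝ) : Splx X → ℝ :=
  fun θ => ∑ m : CNset X N, g m * bern N m.1 θ

/-- `Mn_N := CoMn_N ∘ Hy_N`. -/
noncomputable def Mn {X : Type*} [Fintype X] [DecidableEq X] (N : ℕ)
    (f : (Fin N → X) → ℝ) : Splx X → ℝ :=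
  CoMn N (HyFun N f)

/-- Coherence of a set of desirable gambles `D̃ ⊆ V_N(Σ_X)` with respect to the Bernstein
ordering: `0 ∉ D̃`; every positive linear combination of Bernstein gambles belongs to `D̃`;
`D̃` is closed under multiplication by positive reals and under addition. -/
def CohDesBern {X : Type*} [Fintype X] (N : ℕ) (Dt : Set (Splx X → ℝ)) : Prop :=
  (0 : Splx X → ℝ) ∉ Dt ∧
  Posi {h | ∃ m ∈ CNset X N, h = bern N m} ⊆ Dt ∧
  (∀ h ∈ Dt, ∀ l : ℝ, 0 < l → l • h ∈ Dt) ∧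
  (∀ h ∈ Dt, ∀ h' ∈ Dt, h + h' ∈ Dt)

set_option linter.unusedSectionVars false
set_option linter.unusedVariables false
section Aux
variable {X : Type*} [Fintype X] [DecidableEq X] {N : ℕ}

lemma sum_countVec (x : Fin N → X) : ∑ z, countVec N x z = N := by
  classical
  have := Finset.card_eq_sum_card_fiberwise
    (f := x) (s := Finset.univ) (t := Finset.univ) (fun a _ => Finset.mem_univ _)
  simpa [countVec] using this.symm

lemma countVec_mem (x : Fin N → X) : countVec N x ∈ CNset X N := sum_countVec x

lemma countVec_comp (σ : Equiv.Perm (Fin N)) (x : Fin N → X) :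
    countVec N (fun k => x (σ k)) = countVec N x := by
  funext z
  exact Finset.card_nbij (i := fun k => σ k) (fun k hk => by simpa using hk) (fun a ha b hb h => σ.injective h)
    (fun k hk => ⟨σ.symm k, by simpa using hk, by simp⟩)

lemma mem_atom_iff {m : X → ℕ} {y : Fin N → X} : y ∈ atom N m ↔ countVec N y = m := by
  simp [atom]

lemma Hy_add (f g : (Fin N → X) → ℝ) (m : X → ℕ) :
    Hy N (f + g) m = Hy N f m + Hy N g m := by
  simp [Hy, Finset.sum_add_distrib, mul_add]

lemma Hy_smul (c : ℝ) (f : (Fin N → X) → ℝ) (m : X → ℕ) :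
    Hy N (c • f) m = c * Hy N f m := by
  simp only [Hy, Pi.smul_apply, smul_eq_mul, Finset.mul_sum, ← mul_assoc]
  congr 1; ext y; ring

lemma Hy_lift (σ : Equiv.Perm (Fin N)) (f : (Fin N → X) → ℝ) (m : X → ℕ) :
    Hy N (lift N σ f) m = Hy N f m := by
  unfold Hy lift
  congr 1
  apply Finset.sum_nbij' (i := fun y => fun k => y (σ k)) (j := fun y => fun k => y (σ.symm k))
  · intro y hy; rw [mem_atom_iff] at hy ⊢; rw [countVec_comp]; exact hy
  · intro y hy; rw [mem_atom_iff] at hy ⊢; rw [countVec_comp]; exact hy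
  · intro y _; funext k; simp
  · intro y _; funext k; simp
  · intro y _; rfl

lemma Hy_sub (f g : (Fin N → X) → ℝ) (m : X → ℕ) :
    Hy N (f - g) m = Hy N f m - Hy N g m := by
  have h1 := Hy_add (f - g) g m
  simp only [sub_add_cancel] at h1
  linarith

lemma HyFun_mem_IN {h : (Fin N → X) → ℝ} (hh : h ∈ IN X N) : HyFun N h = 0 := by
  induction hh using Submodule.span_induction with
  | mem g hg =>
      obtain ⟨f, σ, rfl⟩ := hg
      funext m
      simp [HyFun, Hy_sub, Hy_lift]
  | zero => funext m; simp [HyFun, Hy]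
  | add f g _ _ hf hg =>
      funext m
      have : HyFun N (f + g) m = HyFun N f m + HyFun N g m := Hy_add f g m.1
      simp [this, congrFun hf m, congrFun hg m]
  | smul c f _ hf =>
      funext m
      have : HyFun N (c • f) m = c * HyFun N f m := Hy_smul c f m.1
      simp [this, congrFun hf m]

lemma CoMn_add (g g' : CNset X N → ℝ) : CoMn N (g + g') = CoMn N g + CoMn N g' := by
  funext θ
  simp [CoMn, add_mul, Finset.sum_add_distrib]

lemma Mn_add (f g : (Fin N → X) → ℝ) : Mn N (f + g) = Mn N f + Mn N g := by
  have h : HyFun N (f + g) = HyFun N f + HyFun N g := by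
    funext m; exact Hy_add f g m.1
  rw [Mn, h, CoMn_add]; rfl

lemma Mn_smul (c : ℝ) (f : (Fin N → X) → ℝ) : Mn N (c • f) = c • Mn N f := by
  funext θ
  have h : HyFun N (c • f) = fun m => c * HyFun N f m := by
    funext m; exact Hy_smul c f m.1
  simp only [Mn, h, CoMn, Pi.smul_apply, smul_eq_mul, Finset.mul_sum]
  congr 1; ext m; ring

lemma Mn_zero : Mn N (0 : (Fin N → X) → ℝ) = 0 := by
  funext θ
  simp [Mn, CoMn, HyFun, Hy]

lemma Mn_IN {h : (Fin N → X) → ℝ} (hh : h ∈ IN X N) : Mn N h = 0 := by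
  funext θ
  simp [Mn, HyFun_mem_IN hh, CoMn]

lemma Mn_add_IN (f : (Fin N → X) → ℝ) {h : (Fin N → X) → ℝ} (hh : h ∈ IN X N) :
    Mn N (f + h) = Mn N f := by
  rw [Mn_add, Mn_IN hh, add_zero]

lemma atom_nonempty {m : X → ℕ} (hm : m ∈ CNset X N) : (atom N m).Nonempty := by
  classical
  have hc : Fintype.card (Σ z : X, Fin (m z)) = N := by
    simp only [Fintype.card_sigma, Fintype.card_fin]
    exact hm
  let e : (Σ z : X, Fin (m z)) ≃ Fin N := Fintype.equivFinOfCardEq hc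
  refine ⟨fun k => (e.symm k).1, ?_⟩
  rw [mem_atom_iff]
  funext z
  have h1 : countVec N (fun k => (e.symm k).1) z
      = Fintype.card {k : Fin N // (e.symm k).1 = z} := by
    rw [Fintype.card_subtype]; rfl
  rw [h1]
  have e2 : {k : Fin N // (e.symm k).1 = z} ≃ {s : Σ w : X, Fin (m w) // s.1 = z} :=
    e.symm.subtypeEquiv (fun k => Iff.rfl)
  have e3 : {s : Σ w : X, Fin (m w) // s.1 = z} ≃ Fin (m z) :=
    { toFun := fun s => (Eq.mpr (by rw [s.2]) s.1.2 : Fin (m z))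
      invFun := fun j => ⟨⟨z, j⟩, rfl⟩
      left_inv := by rintro ⟨⟨w, j⟩, rfl⟩; rfl
      right_inv := fun j => rfl }
  rw [Fintype.card_congr (e2.trans e3), Fintype.card_fin]

lemma atom_card_pos {m : X → ℕ} (hm : m ∈ CNset X N) : 0 < (atom N m).card :=
  Finset.card_pos.2 (atom_nonempty hm)

/-- Same count vector implies related by a permutation. -/
lemma exists_perm_of_countVec_eq {x y : Fin N → X} (h : countVec N y = countVec N x) :
    ∃ σ : Equiv.Perm (Fin N), y = fun k => x (σ k) := by
  classical
  have hcard : ∀ z, Fintype.card {k : Fin N // y k = z} = Fintype.card {k : Fin N // x k = z} := by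
    intro z
    have h1 : countVec N y z = countVec N x z := congrFun h z
    simp only [countVec] at h1
    simpa only [Fintype.card_subtype] using h1
  let e : ∀ z, {k : Fin N // y k = z} ≃ {k : Fin N // x k = z} :=
    fun z => Fintype.equivOfCardEq (hcard z)
  refine ⟨Equiv.ofFiberEquiv e, ?_⟩
  funext k
  exact (Equiv.ofFiberEquiv_map e k).symm

/-- The symmetrization of a gamble. -/
noncomputable def Sym (N : ℕ) (f : (Fin N → X) → ℝ) : (Fin N → X) → ℝ :=
  fun x => (1 / (Fintype.card (Equiv.Perm (Fin N)) : ℝ)) *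
    ∑ σ : Equiv.Perm (Fin N), f (fun k => x (σ k))

lemma sub_Sym_mem_IN (f : (Fin N → X) → ℝ) : f - Sym N f ∈ IN X N := by
  classical
  have hrepr : f - Sym N f = (1 / (Fintype.card (Equiv.Perm (Fin N)) : ℝ)) •
      ∑ σ : Equiv.Perm (Fin N), (f - lift N σ f) := by
    funext x
    have hcard : (0:ℝ) < (Fintype.card (Equiv.Perm (Fin N)) : ℝ) := by
      exact_mod_cast Fintype.card_pos
    simp only [Pi.sub_apply, Pi.smul_apply, Finset.sum_apply, lift, Sym, smul_eq_mul,
      Finset.sum_sub_distrib, Finset.sum_const, Finset.card_univ, nsmul_eq_mul, mul_sub]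
    field_simp
    rw [Pi.mul_apply, Pi.natCast_apply, mul_comm]
  rw [hrepr]
  refine Submodule.smul_mem _ _ (Submodule.sum_mem _ (fun σ _ => ?_))
  exact Submodule.subset_span ⟨f, σ, rfl⟩

lemma Sym_eq_Hy (f : (Fin N → X) → ℝ) (x : Fin N → X) :
    Sym N f x = Hy N f (countVec N x) := by
  classical
  set m := countVec N x with hm
  set Φ : Equiv.Perm (Fin N) → (Fin N → X) := fun σ => fun k => x (σ k) with hΦ
  have hmaps : ∀ σ ∈ (Finset.univ : Finset (Equiv.Perm (Fin N))), Φ σ ∈ atom N m :=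
    fun σ _ => mem_atom_iff.2 (countVec_comp σ x)
  set s := (Finset.univ.filter (fun σ : Equiv.Perm (Fin N) => Φ σ = x)).card with hs
  have hfiber : ∀ y ∈ atom N m, (Finset.univ.filter (fun σ => Φ σ = y)).card = s := by
    intro y hy
    obtain ⟨τ, hτ⟩ := exists_perm_of_countVec_eq (mem_atom_iff.1 hy)
    rw [hs]
    apply Finset.card_nbij' (i := fun σ => τ.symm.trans σ) (j := fun σ => τ.trans σ)
    · intro σ hσ
      simp only [Finset.mem_coe, Finset.mem_filter, Finset.mem_univ, true_and] at hσ ⊢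
      funext k
      have h2 : Φ (τ.symm.trans σ) k = Φ σ (τ.symm k) := rfl
      rw [h2, hσ, hτ]
      simp
    · intro σ hσ
      simp only [Finset.mem_coe, Finset.mem_filter, Finset.mem_univ, true_and] at hσ ⊢
      funext k
      have h1 : Φ (τ.trans σ) k = Φ σ (τ k) := rfl
      rw [h1, hσ]
      exact (congrFun hτ k).symm
    · intro σ _; ext k; simp
    · intro σ _; ext k; simp
  have hsum : ∑ σ : Equiv.Perm (Fin N), f (Φ σ) = ∑ y ∈ atom N m, (s : ℝ) * f y := by
    rw [← Finset.sum_fiberwise_of_maps_to hmaps]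
    refine Finset.sum_congr rfl (fun y hy => ?_)
    have hc : ∀ σ ∈ Finset.univ.filter (fun σ => Φ σ = y), f (Φ σ) = f y := by
      intro σ hσ
      simp only [Finset.mem_filter] at hσ
      rw [hσ.2]
    rw [Finset.sum_congr rfl hc, Finset.sum_const, hfiber y hy, nsmul_eq_mul]
  have hcount : Fintype.card (Equiv.Perm (Fin N)) = (atom N m).card * s := by
    rw [← Finset.card_univ,
      Finset.card_eq_sum_card_fiberwise hmaps, Finset.sum_congr rfl hfiber,
      Finset.sum_const, smul_eq_mul]
  have hxatom : x ∈ atom N m := mem_atom_iff.2 rfl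
  have hspos : 0 < s := by
    rw [hs]
    apply Finset.card_pos.2
    exact ⟨1, by simp [hΦ]⟩
  have hapos : 0 < (atom N m).card := Finset.card_pos.2 ⟨x, hxatom⟩
  have hA : (Fintype.card (Equiv.Perm (Fin N)) : ℝ) = ((atom N m).card : ℝ) * s := by
    exact_mod_cast congrArg (fun n : ℕ => (n : ℝ)) hcount
  rw [Hy]
  simp only [Sym]
  rw [show (∑ σ : Equiv.Perm (Fin N), f fun k => x (σ k))
      = ∑ σ : Equiv.Perm (Fin N), f (Φ σ) from rfl, hsum, ← Finset.mul_sum, hA]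
  have hs0 : (s:ℝ) ≠ 0 := Nat.cast_ne_zero.2 hspos.ne'
  have ha0 : ((atom N m).card:ℝ) ≠ 0 := Nat.cast_ne_zero.2 hapos.ne'
  field_simp

lemma digits_inj (b : ℕ) : ∀ (n : ℕ) (v w : Fin n → ℕ), (∀ i, v i < b) → (∀ i, w i < b) →
    (∑ i, v i * b ^ (i : ℕ)) = (∑ i, w i * b ^ (i : ℕ)) → v = w := by
  intro n
  induction n with
  | zero => intro v w _ _ _; funext i; exact i.elim0
  | succ n ih =>
    intro v w hv hw hsum
    have hb : 0 < b := lt_of_le_of_lt (Nat.zero_le _) (hv 0)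
    have hrw : ∀ u : Fin (n+1) → ℕ,
        (∑ i, u i * b ^ (i:ℕ)) = u 0 + b * ∑ i : Fin n, u i.succ * b ^ (i:ℕ) := by
      intro u
      rw [Fin.sum_univ_succ]
      simp only [Fin.val_zero, pow_zero, mul_one, Fin.val_succ, Finset.mul_sum]
      congr 1
      refine Finset.sum_congr rfl (fun i _ => ?_)
      ring
    rw [hrw v, hrw w] at hsum
    have h0 : v 0 = w 0 := by
      have := congrArg (· % b) hsum
      simpa [Nat.add_mul_mod_self_left, Nat.mod_eq_of_lt (hv 0), Nat.mod_eq_of_lt (hw 0)]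
        using this
    have htail : (∑ i : Fin n, v i.succ * b ^ (i:ℕ)) = ∑ i : Fin n, w i.succ * b ^ (i:ℕ) := by
      rw [h0] at hsum
      exact Nat.eq_of_mul_eq_mul_left hb (Nat.add_left_cancel hsum)
    have htl := ih (fun i => v i.succ) (fun i => w i.succ) (fun i => hv _) (fun i => hw _) htail
    funext i
    refine Fin.cases h0 (fun j => ?_) i
    exact congrFun htl j

lemma mem_CNset_le {m : X → ℕ} (hm : m ∈ CNset X N) (z : X) : m z ≤ N := by
  have : m z ≤ ∑ w, m w :=
    Finset.single_le_sum (fun i _ => Nat.zero_le (m i)) (Finset.mem_univ z)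
  exact this.trans_eq hm

/-- Weights for the separating curve. -/
noncomputable def wgt (X : Type*) [Fintype X] (N : ℕ) (z : X) : ℕ :=
  (N + 1) ^ ((Fintype.equivFin X z : Fin (Fintype.card X)) : ℕ)

/-- The base-(N+1) exponent functional, injective on `CNset`. -/
noncomputable def expo (X : Type*) [Fintype X] (N : ℕ) (m : X → ℕ) : ℕ :=
  ∑ z, m z * wgt X N z

lemma expo_inj {m m' : X → ℕ} (hm : m ∈ CNset X N) (hm' : m' ∈ CNset X N)
    (h : expo X N m = expo X N m') : m = m' := by
  classical
  set ι := Fintype.equivFin X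
  have hre : ∀ u : X → ℕ, expo X N u = ∑ i : Fin (Fintype.card X),
      u (ι.symm i) * (N+1) ^ (i : ℕ) := by
    intro u
    rw [expo, ← Equiv.sum_comp ι.symm (fun z => u z * wgt X N z)]
    refine Finset.sum_congr rfl (fun i _ => ?_)
    simp [wgt, ι]
  rw [hre, hre] at h
  have := digits_inj (N+1) (Fintype.card X) (fun i => m (ι.symm i)) (fun i => m' (ι.symm i))
    (fun i => Nat.lt_succ_of_le (mem_CNset_le hm _))
    (fun i => Nat.lt_succ_of_le (mem_CNset_le hm' _)) h
  funext z
  have hz := congrFun this (ι z)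
  simpa using hz

lemma binomR_pos (m : X → ℕ) : 0 < binomR N m := by
  apply div_pos
  · exact_mod_cast N.factorial_pos
  · exact Finset.prod_pos (fun z _ => by exact_mod_cast (m z).factorial_pos)

/-- The curve used to separate Bernstein polynomials. -/
noncomputable def curve (X : Type*) [Fintype X] (N : ℕ) (t : ℝ) : X → ℝ :=
  fun z => t ^ (wgt X N z) / (∑ u, t ^ (wgt X N u))

variable [Nonempty X]

lemma curveS_pos {t : ℝ} (ht : 0 < t) : 0 < ∑ u : X, t ^ (wgt X N u) :=
  Finset.sum_pos (fun u _ => pow_pos ht _) Finset.univ_nonempty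

lemma curve_mem {t : ℝ} (ht : 0 < t) : curve X N t ∈ Splx X := by
  constructor
  · intro z
    exact le_of_lt (div_pos (pow_pos ht _) (curveS_pos (X := X) (N := N) ht))
  · simp only [curve]
    rw [← Finset.sum_div]
    exact div_self (ne_of_gt (curveS_pos (X := X) (N := N) ht))

lemma prod_curve_pow {t : ℝ} (ht : 0 < t) {m : X → ℕ} (hm : m ∈ CNset X N) :
    ∏ z, (curve X N t z) ^ (m z) = t ^ (expo X N m) / (∑ u, t ^ (wgt X N u)) ^ N := by
  have hS := curveS_pos (X := X) (N := N) ht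
  simp only [curve, div_pow]
  rw [Finset.prod_div_distrib]
  congr 1
  · rw [expo, ← Finset.prod_pow_eq_pow_sum]
    refine Finset.prod_congr rfl (fun z _ => ?_)
    rw [← pow_mul, mul_comm]
  · rw [Finset.prod_pow_eq_pow_sum]
    rw [hm]

lemma CoMn_inj_zero {g : CNset X N → ℝ} (hg : CoMn N g = 0) : g = 0 := by
  classical
  set P : Polynomial ℝ :=
    ∑ m : CNset X N, Polynomial.C (g m * binomR N m.1) * Polynomial.X ^ (expo X N m.1)
    with hP
  have hroot : ∀ t : ℝ, 0 < t → P.eval t = 0 := by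
    intro t ht
    have hS := curveS_pos (X := X) (N := N) ht
    have h0 : CoMn N g ⟨curve X N t, curve_mem ht⟩ = 0 := by rw [hg]; rfl
    rw [CoMn] at h0
    have h1 : ∑ m : CNset X N, g m * bern N m.1 ⟨curve X N t, curve_mem ht⟩
        = (∑ m : CNset X N, g m * binomR N m.1 * t ^ (expo X N m.1))
          / (∑ u, t ^ (wgt X N u)) ^ N := by
      rw [Finset.sum_div]
      refine Finset.sum_congr rfl (fun m _ => ?_)
      rw [bern]
      rw [show ∏ z, ((⟨curve X N t, curve_mem ht⟩ : Splx X) : X → ℝ) z ^ (m.1 z)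
          = ∏ z, (curve X N t z) ^ (m.1 z) from rfl]
      rw [prod_curve_pow ht m.2]
      field_simp
    rw [h1] at h0
    have h2 : ∑ m : CNset X N, g m * binomR N m.1 * t ^ (expo X N m.1) = 0 := by
      have := div_eq_zero_iff.1 h0
      rcases this with h | h
      · exact h
      · exact absurd h (ne_of_gt (pow_pos hS N))
    rw [hP]
    simp only [Polynomial.eval_finset_sum, Polynomial.eval_mul, Polynomial.eval_C,
      Polynomial.eval_pow, Polynomial.eval_X]
    exact h2
  have hP0 : P = 0 := by
    apply Polynomial.eq_zero_of_infinite_isRoot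
    apply Set.Infinite.mono (s := Set.Ioi (0:ℝ))
    · intro t ht
      exact hroot t ht
    · exact Set.Ioi_infinite 0
  funext m
  have hco : P.coeff (expo X N m.1) = g m * binomR N m.1 := by
    rw [hP, Polynomial.finset_sum_coeff]
    rw [Finset.sum_eq_single m]
    · rw [Polynomial.coeff_C_mul, Polynomial.coeff_X_pow, if_pos rfl, mul_one]
    · intro m' _ hne
      rw [Polynomial.coeff_C_mul, Polynomial.coeff_X_pow]
      rw [if_neg, mul_zero]
      intro hexp
      exact hne (Subtype.ext (expo_inj m'.2 m.2 hexp.symm))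
    · intro hmem
      exact absurd (Finset.mem_univ m) hmem
  rw [hP0, Polynomial.coeff_zero] at hco
  have := (mul_eq_zero.1 hco.symm).resolve_right (ne_of_gt (binomR_pos m.1))
  simpa using this

lemma CoMn_sub (g g' : CNset X N → ℝ) : CoMn N (g - g') = CoMn N g - CoMn N g' := by
  funext θ
  simp [CoMn, sub_mul, Finset.sum_sub_distrib]

lemma CoMn_inj {g g' : CNset X N → ℝ} (h : CoMn N g = CoMn N g') : g = g' := by
  have : CoMn N (g - g') = 0 := by rw [CoMn_sub, h, sub_self]
  have h0 := CoMn_inj_zero this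
  funext m
  have := congrFun h0 m
  simp only [Pi.sub_apply, Pi.zero_apply, sub_eq_zero] at this
  exact this

lemma Hy_indicator {m m' : X → ℕ} (hm : m ∈ CNset X N) :
    Hy N (fun x => if countVec N x = m' then (1:ℝ) else 0) m = if m = m' then 1 else 0 := by
  have hcard : ((atom N m).card : ℝ) ≠ 0 := Nat.cast_ne_zero.2 (atom_card_pos hm).ne'
  by_cases h : m = m'
  · subst h
    rw [Hy, if_pos rfl]
    rw [Finset.sum_congr rfl (fun y hy => if_pos (mem_atom_iff.1 hy))]
    rw [Finset.sum_const, nsmul_eq_mul, mul_one]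
    field_simp
  · rw [Hy, if_neg h]
    rw [Finset.sum_congr rfl (fun y hy => if_neg (fun hh => h ((mem_atom_iff.1 hy).symm.trans hh)))]
    simp

lemma Mn_indicator {m : X → ℕ} (hm : m ∈ CNset X N) :
    Mn N (fun x => if countVec N x = m then (1:ℝ) else 0) = bern N m := by
  funext θ
  rw [Mn, CoMn]
  rw [Finset.sum_eq_single (⟨m, hm⟩ : CNset X N)]
  · rw [show HyFun N (fun x => if countVec N x = m then (1:ℝ) else 0) ⟨m, hm⟩
        = Hy N (fun x => if countVec N x = m then (1:ℝ) else 0) m from rfl,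
      Hy_indicator hm, if_pos rfl, one_mul]
  · intro m' _ hne
    rw [show HyFun N (fun x => if countVec N x = m then (1:ℝ) else 0) m'
        = Hy N (fun x => if countVec N x = m then (1:ℝ) else 0) m'.1 from rfl,
      Hy_indicator m'.2,
      if_neg (fun hh => hne (Subtype.ext hh)), zero_mul]
  · intro hmem; exact absurd (Finset.mem_univ _) hmem

lemma Mn_sum {ι : Type*} (s : Finset ι) (F : ι → (Fin N → X) → ℝ) :
    Mn N (∑ i ∈ s, F i) = ∑ i ∈ s, Mn N (F i) := by
  induction s using Finset.cons_induction with
  | empty => simpa using Mn_zero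
  | cons a s ha ih => rw [Finset.sum_cons, Finset.sum_cons, Mn_add, ih]

lemma Mn_eq_sum_bern (f : (Fin N → X) → ℝ) :
    Mn N f = ∑ m : CNset X N, HyFun N f m • bern N m.1 := by
  funext θ
  rw [Mn, CoMn, Finset.sum_apply]
  rfl

/-- Every monomial of total degree at most `N` is in the range of `Mn`. -/
lemma exists_Mn_monomial : ∀ (k : ℕ) (α : X → ℕ), (∑ z, α z) + k = N →
    ∃ f, Mn N f = fun θ : Splx X => ∏ z, (θ.1 z) ^ (α z) := by
  intro k
  induction k with
  | zero =>
    intro α hα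
    rw [add_zero] at hα
    have hb := binomR_pos (N := N) α
    refine ⟨(1 / binomR N α) • (fun x => if countVec N x = α then (1:ℝ) else 0), ?_⟩
    rw [Mn_smul, Mn_indicator hα]
    funext θ
    simp only [Pi.smul_apply, bern, smul_eq_mul]
    field_simp
  | succ k ih =>
    intro α hα
    have hks : ∀ z : X, (∑ w, (α w + if w = z then 1 else 0)) + k = N := by
      intro z
      rw [Finset.sum_add_distrib, Finset.sum_ite_eq' Finset.univ z (fun _ => 1)]
      simp only [Finset.mem_univ, if_true]
      omega
    choose G hGq using fun z => ih _ (hks z)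
    refine ⟨∑ z, G z, ?_⟩
    rw [Mn_sum]
    funext θ
    rw [Finset.sum_apply]
    have hGz : ∀ z, Mn N (G z) θ = ∏ w, (θ.1 w) ^ (α w + if w = z then 1 else 0) :=
      fun z => congrFun (hGq z) θ
    rw [Finset.sum_congr rfl (fun z _ => hGz z)]
    have hprod : ∀ z, ∏ w, (θ.1 w) ^ (α w + if w = z then 1 else 0)
        = θ.1 z * ∏ w, (θ.1 w) ^ (α w) := by
      intro z
      have h2 : (∏ w, (θ.1 w) ^ (if w = z then 1 else 0)) = θ.1 z := by
        rw [Finset.prod_eq_single z (fun w _ hw => by rw [if_neg hw, pow_zero])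
          (fun hm => absurd (Finset.mem_univ z) hm), if_pos rfl, pow_one]
      calc ∏ w, (θ.1 w) ^ (α w + if w = z then 1 else 0)
          = (∏ w, (θ.1 w) ^ (α w)) * ∏ w, (θ.1 w) ^ (if w = z then 1 else 0) := by
            rw [← Finset.prod_mul_distrib]
            exact Finset.prod_congr rfl (fun w _ => pow_add _ _ _)
      _ = θ.1 z * ∏ w, (θ.1 w) ^ (α w) := by rw [h2, mul_comm]
    rw [Finset.sum_congr rfl (fun z _ => hprod z), ← Finset.sum_mul, θ.2.2, one_mul]

lemma exists_Mn_eq {h : Splx X → ℝ} (hh : h ∈ VN X N) : ∃ f, Mn N f = h := by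
  classical
  obtain ⟨p, hdeg, hval⟩ := hh
  have key : ∀ d ∈ p.support, ∃ f, Mn N f
      = fun θ : Splx X => p.coeff d * ∏ z, (θ.1 z) ^ (d z) := by
    intro d hd
    have hdN : (∑ z, d z) ≤ N := by
      have h1 := MvPolynomial.le_totalDegree (p := p) hd
      have h2 : (d.sum fun _ e => e) = ∑ z, d z :=
        Finsupp.sum_fintype _ _ (fun _ => rfl)
      rw [h2] at h1
      exact h1.trans hdeg
    obtain ⟨f, hf⟩ := exists_Mn_monomial (N - ∑ z, d z) (fun z => d z)
      (Nat.add_sub_cancel' hdN)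
    refine ⟨(p.coeff d) • f, ?_⟩
    rw [Mn_smul, hf]
    funext θ
    simp
  -- choose representatives and sum
  choose F hF using key
  refine ⟨∑ d ∈ p.support.attach, F d.1 d.2, ?_⟩
  rw [Mn_sum]
  funext θ
  rw [Finset.sum_apply, hval θ, MvPolynomial.eval_eq']
  refine Eq.trans (Finset.sum_congr rfl (fun d _ => congrFun (hF d.1 d.2) θ)) ?_
  exact Finset.sum_attach p.support (fun d => p.coeff d * ∏ z, (θ.1 z) ^ (d z))

/-- `Mn f` is a polynomial of degree at most `N` on the simplex. -/
lemma Mn_mem_VN (f : (Fin N → X) → ℝ) : Mn N f ∈ VN X N := by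
  classical
  refine ⟨∑ m : CNset X N, MvPolynomial.monomial (Finsupp.equivFunOnFinite.symm m.1)
      (HyFun N f m * binomR N m.1), ?_, ?_⟩
  · apply MvPolynomial.totalDegree_finsetSum_le
    intro m _
    have hsum : ((Finsupp.equivFunOnFinite.symm m.1).sum fun (_ : X) (e : ℕ) => e)
        = ∑ z, m.1 z := Finsupp.sum_fintype _ _ (fun _ => rfl)
    exact (MvPolynomial.totalDegree_monomial_le _ _).trans (le_of_eq (hsum.trans m.2))
  · intro θ
    rw [map_sum]
    rw [Mn, CoMn]
    refine Finset.sum_congr rfl (fun m _ => ?_)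
    rw [MvPolynomial.eval_monomial, bern]
    rw [show ((Finsupp.equivFunOnFinite.symm m.1).prod fun z e => θ.1 z ^ e)
        = ∏ z, θ.1 z ^ (m.1 z) from Finsupp.prod_fintype _ _ (fun z => pow_zero _)]
    ring

lemma Hy_nonneg {f : (Fin N → X) → ℝ} (hf : ∀ x, 0 ≤ f x) (m : X → ℕ) : 0 ≤ Hy N f m :=
  mul_nonneg (by positivity) (Finset.sum_nonneg fun y _ => hf y)

lemma Hy_pos {f : (Fin N → X) → ℝ} (hf : ∀ x, 0 ≤ f x) {x0 : Fin N → X} (hx : 0 < f x0) :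
    0 < Hy N f (countVec N x0) := by
  have hx0 : x0 ∈ atom N (countVec N x0) := mem_atom_iff.2 rfl
  apply mul_pos
  · rw [one_div]
    exact inv_pos.2 (Nat.cast_pos.2 (Finset.card_pos.2 ⟨x0, hx0⟩))
  · exact lt_of_lt_of_le hx (Finset.single_le_sum (fun y _ => hf y) hx0)

lemma Mn_pos_mem_Posi {f : (Fin N → X) → ℝ} (hf : ∀ x, 0 ≤ f x) (hne : f ≠ 0) :
    Mn N f ∈ Posi {h : Splx X → ℝ | ∃ m ∈ CNset X N, h = bern N m} := by
  classical
  obtain ⟨x0, hx0⟩ : ∃ x0, f x0 ≠ 0 := by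
    by_contra hc; push_neg at hc; exact hne (funext hc)
  have hx0' : 0 < f x0 := lt_of_le_of_ne (hf x0) (Ne.symm hx0)
  set S : Finset (CNset X N) := Finset.univ.filter (fun m => HyFun N f m ≠ 0) with hS
  have hm0 : (⟨countVec N x0, countVec_mem x0⟩ : CNset X N) ∈ S := by
    simp only [hS, Finset.mem_filter, Finset.mem_univ, true_and]
    exact ne_of_gt (Hy_pos hf hx0')
  set e : Fin S.card ≃ S := (Fintype.equivFinOfCardEq (Fintype.card_coe S)).symm with he
  refine ⟨S.card, fun k => HyFun N f (e k).1, fun k => bern N ((e k).1).1,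
    Finset.card_pos.2 ⟨_, hm0⟩, ?_, ?_, ?_⟩
  · intro k
    have hk := (e k).2
    simp only [hS, Finset.mem_filter, Finset.mem_univ, true_and] at hk
    exact lt_of_le_of_ne (Hy_nonneg hf _) (Ne.symm hk)
  · intro k
    exact ⟨((e k).1).1, ((e k).1).2, rfl⟩
  · rw [Mn_eq_sum_bern]
    set F : CNset X N → (Splx X → ℝ) := fun m => HyFun N f m • bern N m.1 with hF
    have h1 : (∑ k : Fin S.card, F (e k).1) = ∑ m ∈ S, F m := by
      rw [Equiv.sum_comp e (fun m : S => F m.1)]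
      exact Finset.sum_coe_sort S F
    rw [show (∑ k : Fin S.card, HyFun N f (e k).1 • bern N ((e k).1).1)
      = ∑ k : Fin S.card, F (e k).1 from rfl, h1]
    refine (Finset.sum_subset (Finset.subset_univ S) (fun m _ hm => ?_)).symm
    have hz : HyFun N f m = 0 := by
      by_contra hne'
      exact hm (by simp only [hS, Finset.mem_filter, Finset.mem_univ, true_and]; exact hne')
    rw [hz, zero_smul]
end Aux

/-- Finite Representation in polynomial form, sets of desirable gambles:
`D ⊆ L(X^N)` is exchangeable (i.e. `D + I_N ⊆ D`) iff there is a (necessarily unique) set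
`D̃ ⊆ V_N(Σ_X)` with `D = {f : Mn_N(f) ∈ D̃}`; in that case `D̃ = Mn_N(D)`, and `D` is
coherent iff `D̃` is coherent with respect to the Bernstein ordering. -/
theorem statement_14 (X : Type*) [Fintype X] [DecidableEq X] [Nonempty X] (N : ℕ) (hN : 0 < N)
    (D : Set ((Fin N → X) → ℝ)) :
    ((∀ f ∈ D, ∀ h ∈ IN X N, f + h ∈ D) ↔
      ∃ Dt : Set (Splx X → ℝ), Dt ⊆ VN X N ∧ D = {f | Mn N f ∈ Dt}) ∧
    (∀ Dt Dt' : Set (Splx X → ℝ), Dt ⊆ VN X N → Dt' ⊆ VN X N →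
        D = {f | Mn N f ∈ Dt} → D = {f | Mn N f ∈ Dt'} → Dt = Dt') ∧
    (∀ Dt : Set (Splx X → ℝ), Dt ⊆ VN X N → D = {f | Mn N f ∈ Dt} →
        Dt = Mn N '' D ∧ (CohDes D ↔ CohDesBern N Dt)) := by
  classical
  refine ⟨⟨?_, ?_⟩, ?_, ?_⟩
  · -- exchangeable → representation
    intro hexch
    refine ⟨Mn N '' D, ?_, ?_⟩
    · rintro _ ⟨f, _, rfl⟩
      exact Mn_mem_VN f
    · ext f
      simp only [Set.mem_setOf_eq, Set.mem_image]
      constructor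
      · intro hf; exact ⟨f, hf, rfl⟩
      · rintro ⟨g, hg, hMg⟩
        have hHy : HyFun N g = HyFun N f := CoMn_inj hMg
        have hSym : Sym N g = Sym N f := by
          funext x
          rw [Sym_eq_Hy, Sym_eq_Hy]
          exact congrFun hHy ⟨countVec N x, countVec_mem x⟩
        have hIN : f - g ∈ IN X N := by
          have h1 := sub_Sym_mem_IN f
          have h2 := sub_Sym_mem_IN g
          have h3 : f - g = (f - Sym N f) - (g - Sym N g) := by
            rw [hSym]; abel
          rw [h3]
          exact Submodule.sub_mem _ h1 h2
        have := hexch g hg (f - g) hIN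
        simpa using this
  · -- representation → exchangeable
    rintro ⟨Dt, hVN, rfl⟩ f hf h hh
    simp only [Set.mem_setOf_eq] at hf ⊢
    rw [Mn_add_IN f hh]
    exact hf
  · -- uniqueness
    intro Dt Dt' hV hV' hD hD'
    ext h
    constructor
    · intro hh
      obtain ⟨f, hf⟩ := exists_Mn_eq (hV hh)
      have hfD : f ∈ D := by rw [hD]; simp only [Set.mem_setOf_eq, hf]; exact hh
      rw [hD'] at hfD
      simp only [Set.mem_setOf_eq, hf] at hfD
      exact hfD
    · intro hh
      obtain ⟨f, hf⟩ := exists_Mn_eq (hV' hh)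
      have hfD : f ∈ D := by rw [hD']; simp only [Set.mem_setOf_eq, hf]; exact hh
      rw [hD] at hfD
      simp only [Set.mem_setOf_eq, hf] at hfD
      exact hfD
  · -- image and coherence
    intro Dt hV hD
    have himg : Dt = Mn N '' D := by
      ext h
      constructor
      · intro hh
        obtain ⟨f, hf⟩ := exists_Mn_eq (hV hh)
        refine ⟨f, ?_, hf⟩
        rw [hD]; simp only [Set.mem_setOf_eq, hf]; exact hh
      · rintro ⟨f, hf, rfl⟩
        rw [hD] at hf
        exact hf
    refine ⟨himg, ?_, ?_⟩
    · -- CohDes D → CohDesBern Dt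
      rintro ⟨h0, hpos, hsmul, hadd⟩
      refine ⟨?_, ?_, ?_, ?_⟩
      · intro h0t
        refine h0 ?_
        rw [hD]
        simp only [Set.mem_setOf_eq, Mn_zero]
        exact h0t
      · intro v hv
        obtain ⟨n, l, u, hn, hl, hu, rfl⟩ := hv
        choose mk hmk hbk using hu
        set f : (Fin N → X) → ℝ :=
          ∑ k, l k • (fun x => if countVec N x = mk k then (1:ℝ) else 0) with hf
        have hMnf : Mn N f = ∑ k, l k • u k := by
          rw [hf, Mn_sum]
          refine Finset.sum_congr rfl (fun k _ => ?_)
          rw [Mn_smul, Mn_indicator (hmk k), hbk k]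
        have hfnn : ∀ x, 0 ≤ f x := by
          intro x
          rw [hf]
          simp only [Finset.sum_apply, Pi.smul_apply, smul_eq_mul]
          refine Finset.sum_nonneg (fun k _ => mul_nonneg (hl k).le ?_)
          split_ifs <;> norm_num
        have hfne : f ≠ 0 := by
          obtain ⟨x0, hx0⟩ := atom_nonempty (hmk ⟨0, hn⟩)
          intro hf0
          have hfx0 : f x0 = 0 := by rw [hf0]; rfl
          have hpos0 : 0 < f x0 := by
            rw [hf]
            simp only [Finset.sum_apply, Pi.smul_apply, smul_eq_mul]
            refine Finset.sum_pos' (fun k _ => mul_nonneg (hl k).le (by split_ifs <;> norm_num))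
              ⟨⟨0, hn⟩, Finset.mem_univ _, ?_⟩
            rw [if_pos (mem_atom_iff.1 hx0), mul_one]
            exact hl _
          rw [hfx0] at hpos0
          exact lt_irrefl 0 hpos0
        have hfD : f ∈ D := hpos f hfnn hfne
        rw [hD] at hfD
        simp only [Set.mem_setOf_eq, hMnf] at hfD
        exact hfD
      · intro h hh l hl
        obtain ⟨f, hfD, rfl⟩ : ∃ f ∈ D, Mn N f = h := by
          rw [himg] at hh
          obtain ⟨f, hfD, hf⟩ := hh
          exact ⟨f, hfD, hf⟩
        have := hsmul f hfD l hl
        rw [hD] at this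
        simp only [Set.mem_setOf_eq, Mn_smul] at this
        exact this
      · intro h hh h' hh'
        obtain ⟨f, hfD, rfl⟩ : ∃ f ∈ D, Mn N f = h := by
          rw [himg] at hh
          obtain ⟨f, hfD, hf⟩ := hh
          exact ⟨f, hfD, hf⟩
        obtain ⟨g, hgD, rfl⟩ : ∃ g ∈ D, Mn N g = h' := by
          rw [himg] at hh'
          obtain ⟨g, hgD, hg⟩ := hh'
          exact ⟨g, hgD, hg⟩
        have := hadd f hfD g hgD
        rw [hD] at this
        simp only [Set.mem_setOf_eq, Mn_add] at this
        exact this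
    · -- CohDesBern Dt → CohDes D
      rintro ⟨h0, hpos, hsmul, hadd⟩
      refine ⟨?_, ?_, ?_, ?_⟩
      · intro h0D
        rw [hD] at h0D
        simp only [Set.mem_setOf_eq, Mn_zero] at h0D
        exact h0 h0D
      · intro f hfnn hfne
        rw [hD]
        simp only [Set.mem_setOf_eq]
        exact hpos (Mn_pos_mem_Posi hfnn hfne)
      · intro f hf l hl
        rw [hD] at hf ⊢
        simp only [Set.mem_setOf_eq, Mn_smul] at *
        exact hsmul _ hf l hl
      · intro f hf g hg
        rw [hD] at hf hg ⊢
        simp only [Set.mem_setOf_eq, Mn_add] at *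
        exact hadd _ hf _ hg

end ExchPaper
end

section
/- The set I_P := ⋃_{n ∈ ℕ} I_n ⊆ L_fin is a coherent set of indifferent gambles: 0 ∈ I_P; no gamble f with f ≥ 0 and f ≠ 0 belongs to I_P, and no gamble f with f ≤ 0 and f ≠ 0 belongs to I_P; I_P is closed under multiplication by arbitrary real scalars; and I_P is closed under addition. -/
namespace ExchPaper

/-- `f` depends only upon the first `n` variables of the sequence. -/
def DependsOn {X : Type*} (n : ℕ) (f : (ℕ → X) → ℝ) : Prop :=
  ∀ x y : ℕ → X, (∀ k < n, x k = y k) → f x = f y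

/-- `L(X^n)`, identified (via cylindrical extension) with the subspace of gambles on `X^ℕ`
that depend only upon the first `n` variables. -/
def Ln (X : Type*) (n : ℕ) : Set ((ℕ → X) → ℝ) := {f | DependsOn n f}

/-- `L_fin`: the linear space of all gambles of finite structure on `X^ℕ`. -/
def Lfin (X : Type*) : Set ((ℕ → X) → ℝ) := {f | ∃ n, DependsOn n f}
/-- The lift to gambles on `X^ℕ` of a permutation `σ` of `{1,…,n}` (acting on the first `n`
coordinates of a sequence): `(σ^t f)(x) = f(σx)` where `(σx)_k = x_{σ(k)}` for `k < n` and
`(σx)_k = x_k` otherwise. -/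
def liftSeq {X : Type*} (n : ℕ) (σ : Equiv.Perm (Fin n)) (f : (ℕ → X) → ℝ) :
    (ℕ → X) → ℝ :=
  fun x => f (fun k => if h : k < n then x (σ ⟨k, h⟩) else x k)

/-- `I_n`: the linear span of `{f − σ^t f : f ∈ L(X^n), σ a permutation of {1,…,n}}`,
viewed inside `L_fin` via cylindrical extension. -/
def InSub (X : Type*) (n : ℕ) : Submodule ℝ ((ℕ → X) → ℝ) :=
  Submodule.span ℝ
    {g | ∃ f : (ℕ → X) → ℝ, DependsOn n f ∧
      ∃ σ : Equiv.Perm (Fin n), g = f - liftSeq n σ f}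

/-- `I_P = ⋃_{n ∈ ℕ} I_n`. -/
def IP (X : Type*) : Set ((ℕ → X) → ℝ) := ⋃ n : ℕ, (InSub X n : Set ((ℕ → X) → ℝ))


section Aux
variable {X : Type*}


lemma dependsOn_mono {n N : ℕ} (h : n ≤ N) {f : (ℕ → X) → ℝ} (hf : DependsOn n f) :
    DependsOn N f := fun x y hxy => hf x y fun k hk => hxy k (hk.trans_le h)

lemma dependsOn_liftSeq {n : ℕ} (σ : Equiv.Perm (Fin n)) {f : (ℕ → X) → ℝ}
    (hf : DependsOn n f) : DependsOn n (liftSeq n σ f) := by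
  intro x y hxy
  apply hf
  intro k hk
  simp only [hk, dif_pos]
  exact hxy _ (σ ⟨k, hk⟩).2

def dependsSub (X : Type*) (n : ℕ) : Submodule ℝ ((ℕ → X) → ℝ) where
  carrier := {f | DependsOn n f}
  add_mem' := fun hf hg x y h => by simp only [Pi.add_apply, hf x y h, hg x y h]
  zero_mem' := fun x y h => rfl
  smul_mem' := fun c f hf x y h => by simp only [Pi.smul_apply, hf x y h]

lemma InSub_le_depends (n : ℕ) : InSub X n ≤ dependsSub X n := by
  apply Submodule.span_le.2
  rintro g ⟨f, hf, σ, rfl⟩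
  exact Submodule.sub_mem _ hf (dependsOn_liftSeq σ hf)

/-- cylindrical extension of a tuple by an arbitrary fixed element -/
noncomputable def ext [Nonempty X] (n : ℕ) (v : Fin n → X) : ℕ → X :=
  fun k => if h : k < n then v ⟨k, h⟩ else Classical.arbitrary X

noncomputable def Sn (X : Type*) [Fintype X] [Nonempty X] (n : ℕ) : ((ℕ → X) → ℝ) →ₗ[ℝ] ℝ where
  toFun f := ∑ v : Fin n → X, f (ext n v)
  map_add' f g := by simp [Finset.sum_add_distrib]
  map_smul' c f := by simp [Finset.mul_sum]

lemma liftSeq_ext [Nonempty X] [Fintype X] {n : ℕ} (σ : Equiv.Perm (Fin n))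
    (f : (ℕ → X) → ℝ) (v : Fin n → X) :
    liftSeq n σ f (ext n v) = f (ext n (v ∘ σ)) := by
  unfold liftSeq
  congr 1
  funext k
  by_cases hk : k < n
  · simp only [hk, dif_pos, ext, (σ ⟨k, hk⟩).2, Fin.eta, Function.comp]
  · simp only [hk, dif_neg, ext, not_false_iff]

lemma Sn_liftSeq [Nonempty X] [Fintype X] {n : ℕ} (σ : Equiv.Perm (Fin n))
    (f : (ℕ → X) → ℝ) : Sn X n (liftSeq n σ f) = Sn X n f := by
  show ∑ v : Fin n → X, liftSeq n σ f (ext n v) = ∑ v : Fin n → X, f (ext n v)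
  rw [Fintype.sum_equiv (Equiv.arrowCongr σ.symm (Equiv.refl X))
    (fun v => liftSeq n σ f (ext n v)) (fun v => f (ext n v))]
  intro v
  rw [liftSeq_ext]
  rfl

lemma InSub_le_ker (X : Type*) [Fintype X] [Nonempty X] (n : ℕ) :
    InSub X n ≤ LinearMap.ker (Sn X n) := by
  apply Submodule.span_le.2
  rintro g ⟨f, hf, σ, rfl⟩
  simp [LinearMap.mem_ker, map_sub, Sn_liftSeq]

/-- extend a permutation of Fin n to Fin N by the identity -/
def extPerm {n N : ℕ} (h : n ≤ N) (σ : Equiv.Perm (Fin n)) : Equiv.Perm (Fin N) :=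
  σ.extendDomain (p := fun k : Fin N => (k : ℕ) < n)
    { toFun := fun i => ⟨⟨i, i.2.trans_le h⟩, i.2⟩
      invFun := fun k => ⟨(k : Fin N), k.2⟩
      left_inv := fun i => rfl
      right_inv := fun k => rfl }

lemma extPerm_apply_lt {n N : ℕ} (h : n ≤ N) (σ : Equiv.Perm (Fin n)) (k : ℕ)
    (hk : k < n) (hkN : k < N) :
    ((extPerm h σ ⟨k, hkN⟩ : Fin N) : ℕ) = (σ ⟨k, hk⟩ : ℕ) := by
  unfold extPerm
  have := Equiv.Perm.extendDomain_apply_subtype σ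
    (p := fun k : Fin N => (k : ℕ) < n)
    ({ toFun := fun i => ⟨⟨i, i.2.trans_le h⟩, i.2⟩
       invFun := fun k => ⟨(k : Fin N), k.2⟩
       left_inv := fun _ => rfl
       right_inv := fun _ => rfl }) (b := (⟨k, hkN⟩ : Fin N)) hk
  rw [this]; rfl

lemma liftSeq_extPerm {n N : ℕ} (h : n ≤ N) (σ : Equiv.Perm (Fin n))
    {f : (ℕ → X) → ℝ} (hf : DependsOn n f) :
    liftSeq N (extPerm h σ) f = liftSeq n σ f := by
  funext x
  apply hf
  intro k hk
  have hkN : k < N := hk.trans_le h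
  simp only [hkN, hk, dif_pos]
  exact congrArg x (extPerm_apply_lt h σ k hk hkN)


lemma InSub_mono {n N : ℕ} (h : n ≤ N) : InSub X n ≤ InSub X N := by
  apply Submodule.span_le.2
  rintro g ⟨f, hf, σ, rfl⟩
  apply Submodule.subset_span
  exact ⟨f, dependsOn_mono h hf, extPerm h σ, by rw [liftSeq_extPerm h σ hf]⟩

lemma IP_smul {f : (ℕ → X) → ℝ} (hf : f ∈ IP X) (a : ℝ) : a • f ∈ IP X := by
  obtain ⟨n, hn⟩ := Set.mem_iUnion.1 hf
  exact Set.mem_iUnion.2 ⟨n, Submodule.smul_mem _ a hn⟩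

lemma eq_zero_of_nonneg_mem_IP [Fintype X] [Nonempty X] {f : (ℕ → X) → ℝ}
    (hf : f ∈ IP X) (hpos : ∀ x, 0 ≤ f x) : f = 0 := by
  obtain ⟨n, hn⟩ := Set.mem_iUnion.1 hf
  have hdep : DependsOn n f := InSub_le_depends n hn
  have hker : ∑ v : Fin n → X, f (ext n v) = 0 := LinearMap.mem_ker.1 (InSub_le_ker X n hn)
  have hterm : ∀ v : Fin n → X, f (ext n v) = 0 := by
    intro v
    exact (Finset.sum_eq_zero_iff_of_nonneg (fun v _ => hpos (ext n v))).1 hker v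
      (Finset.mem_univ v)
  funext x
  have hx : f x = f (ext n (fun i : Fin n => x i)) := by
    apply hdep
    intro k hk
    simp [ext, hk]
  rw [hx, hterm]
  rfl

end Aux

/-- `I_P = ⋃_n I_n ⊆ L_fin` is a coherent set of indifferent gambles:
`0 ∈ I_P`; no nonzero nonnegative gamble and no nonzero nonpositive gamble belongs to
`I_P`; `I_P` is closed under multiplication by arbitrary real scalars and under
addition. -/
theorem statement_17 (X : Type*) [Fintype X] [Nonempty X] :
    (0 : (ℕ → X) → ℝ) ∈ IP X ∧
    (∀ f : (ℕ → X) → ℝ, (∀ x, 0 ≤ f x) → f ≠ 0 → f ∉ IP X) ∧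
    (∀ f : (ℕ → X) → ℝ, (∀ x, f x ≤ 0) → f ≠ 0 → f ∉ IP X) ∧
    (∀ f ∈ IP X, ∀ a : ℝ, a • f ∈ IP X) ∧
    (∀ f ∈ IP X, ∀ g ∈ IP X, f + g ∈ IP X) := by
  refine ⟨Set.mem_iUnion.2 ⟨0, (InSub X 0).zero_mem⟩, ?_, ?_, ?_, ?_⟩
  · intro f hpos hne hmem
    exact hne (eq_zero_of_nonneg_mem_IP hmem hpos)
  · intro f hneg hne hmem
    have h1 : (-1 : ℝ) • f ∈ IP X := IP_smul hmem (-1)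
    have h2 : (-1 : ℝ) • f = -f := by simp
    rw [h2] at h1
    have h3 : -f = 0 := eq_zero_of_nonneg_mem_IP h1 (fun x => by
      simpa using hneg x)
    apply hne
    simpa using h3
  · intro f hf a
    exact IP_smul hf a
  · intro f hf g hg
    obtain ⟨n, hn⟩ := Set.mem_iUnion.1 hf
    obtain ⟨m, hm⟩ := Set.mem_iUnion.1 hg
    exact Set.mem_iUnion.2 ⟨max n m, Submodule.add_mem _
      (InSub_mono (le_max_left n m) hn) (InSub_mono (le_max_right n m) hm)⟩


end ExchPaper
end
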